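/- arXiv:2211.04301 — 4 statements merged into one kernel-verified Lean document; each statement's English description precedes it below -/
import Mathlib

section
/- If x and x' are nonzero floating-point numbers with precision p such that 10^(−δ) ≤ x/x' ≤ 10^δ, then x ≈_{δ+2} x', i.e., their exponents differ by less than δ+2. -/
/-- If `x` and `x'` are nonzero precision-`p` base-10 floating-point numbers
with `10^(-δ) ≤ x/x' ≤ 10^δ`, then their exponents differ by less than `δ + 2`. -/
theorem fp_ratio_close (p : ℕ) (δ : ℕ) (x x' : ℝ) (m m' : ℝ) (α α' : ℤ)
    (hx : x = m * (10:ℝ) ^ α) (hx' : x' = m' * (10:ℝ) ^ α')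
    (hm : m ∈ Set.Ico (0.1 : ℝ) 1) (hm' : m' ∈ Set.Ico (0.1 : ℝ) 1)
    (hmd : ∃ k : ℤ, m = (k : ℝ) / 10 ^ p) (hmd' : ∃ k : ℤ, m' = (k : ℝ) / 10 ^ p)
    (hratio : (10:ℝ) ^ (-(δ : ℤ)) ≤ x / x' ∧ x / x' ≤ (10:ℝ) ^ (δ : ℤ)) :
    |α - α'| < (δ : ℤ) + 2 := by
  obtain ⟨h1, h2⟩ := hratio
  have hm0 : (0:ℝ) < m := lt_of_lt_of_le (by norm_num) hm.1
  have hm'0 : (0:ℝ) < m' := lt_of_lt_of_le (by norm_num) hm'.1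
  have hr : x / x' = (m / m') * (10:ℝ) ^ (α - α') := by
    rw [hx, hx', zpow_sub₀ (by norm_num : (10:ℝ) ≠ 0)]
    have h1 : ((10:ℝ) ^ α') ≠ 0 := by positivity
    field_simp
  have hp : (0:ℝ) < (10:ℝ) ^ (α - α') := zpow_pos (by norm_num) _
  have hlow : (1/10 : ℝ) < m / m' := by
    rw [lt_div_iff₀ hm'0]
    nlinarith [hm.1, hm'.2]
  have hhigh : m / m' < 10 := by
    rw [div_lt_iff₀ hm'0]
    nlinarith [hm.2, hm'.1]
  have e1 : (10:ℝ) ^ (α - α' - 1) < (10:ℝ) ^ (δ : ℤ) := by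
    calc (10:ℝ) ^ (α - α' - 1) = (1/10) * (10:ℝ) ^ (α - α') := by
          rw [zpow_sub₀ (by norm_num : (10:ℝ) ≠ 0)]; norm_num; ring
      _ < (m / m') * (10:ℝ) ^ (α - α') := by
          exact mul_lt_mul_of_pos_right hlow hp
      _ = x / x' := hr.symm
      _ ≤ (10:ℝ) ^ (δ : ℤ) := h2
  have e2 : (10:ℝ) ^ (-(δ : ℤ)) < (10:ℝ) ^ (α - α' + 1) := by
    calc (10:ℝ) ^ (-(δ : ℤ)) ≤ x / x' := h1
      _ = (m / m') * (10:ℝ) ^ (α - α') := hr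
      _ < 10 * (10:ℝ) ^ (α - α') := mul_lt_mul_of_pos_right hhigh hp
      _ = (10:ℝ) ^ (α - α' + 1) := by
          rw [zpow_add₀ (by norm_num : (10:ℝ) ≠ 0)]; norm_num; ring
  have d1 : α - α' - 1 < (δ : ℤ) := by
    exact_mod_cast (zpow_lt_zpow_iff_right₀ (by norm_num : (1:ℝ) < 10)).mp e1
  have d2 : -(δ : ℤ) < α - α' + 1 := by
    exact_mod_cast (zpow_lt_zpow_iff_right₀ (by norm_num : (1:ℝ) < 10)).mp e2
  rw [abs_lt]
  omega
end

section
/- Let [·] be a rounding function to precision-1 base-10 floating-point numbers that rounds to the nearest representable number. For u = 10^{c₁} and v = 10^{c₂} with c₁, c₂ ∈ ℕ, define temp = [u + v], temp2 = [temp − u], w = [1.1·temp2]. Then w = v if v ≥ u and w = 0 if v < u. -/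
def FP1 : Set ℝ := {y | ∃ m : ℕ, m ≤ 9 ∧ ∃ α : ℤ, y = ((m : ℝ) / 10) * (10:ℝ) ^ α}

lemma fp1_eq {z : ℝ} (hz : z ∈ FP1) (β : ℤ) (h1 : 0.9 * (10:ℝ)^β < z)
    (h2 : z < 2 * (10:ℝ)^β) : z = (10:ℝ)^β := by
  obtain ⟨m, hm, α, rfl⟩ := hz
  have hp : (0:ℝ) < (10:ℝ)^β := by positivity
  have hpa : (0:ℝ) < (10:ℝ)^α := by positivity
  have hm' : (m:ℝ) ≤ 9 := by exact_mod_cast hm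
  rcases lt_trichotomy α (β+1) with h | h | h
  · exfalso
    have hle : (10:ℝ)^α ≤ (10:ℝ)^β := zpow_le_zpow_right₀ (by norm_num) (by omega)
    nlinarith [mul_le_mul_of_nonneg_left hle (by positivity : (0:ℝ) ≤ (m:ℝ)/10)]
  · subst h
    have he : (10:ℝ)^(β+1) = 10 * 10^β := by
      rw [zpow_add_one₀ (by norm_num : (10:ℝ) ≠ 0)]; ring
    rw [he] at h1 h2 ⊢
    interval_cases m <;> push_cast at h1 h2 ⊢ <;> nlinarith [hp]
  · exfalso
    have hle : (10:ℝ)^(β+2) ≤ (10:ℝ)^α := zpow_le_zpow_right₀ (by norm_num) (by omega)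
    have he : (10:ℝ)^(β+2) = 100 * 10^β := by
      rw [show β+2 = β+1+1 from by ring, zpow_add_one₀ (by norm_num : (10:ℝ) ≠ 0),
        zpow_add_one₀ (by norm_num : (10:ℝ) ≠ 0)]; ring
    rcases Nat.eq_zero_or_pos m with rfl | hm0
    · push_cast at h1; nlinarith
    · have hm1 : (1:ℝ) ≤ m := by exact_mod_cast hm0
      nlinarith

lemma pow_mem_FP1 (β : ℤ) : (10:ℝ)^β ∈ FP1 := by
  exact ⟨1, by norm_num, β+1, by rw [zpow_add_one₀ (by norm_num : (10:ℝ) ≠ 0)]; push_cast; ring⟩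

lemma round_fix (round : ℝ → ℝ)
    (hnear : ∀ x y : ℝ, y ∈ FP1 → |x - round x| ≤ |x - y|)
    {x : ℝ} (hx : x ∈ FP1) : round x = x := by
  have h := hnear x x hx
  rw [sub_self, abs_zero] at h
  have := abs_nonneg (x - round x)
  have h0 : x - round x = 0 := abs_eq_zero.mp (le_antisymm h this)
  linarith

lemma round_near_pow (round : ℝ → ℝ) (hmem : ∀ x : ℝ, round x ∈ FP1)
    (hnear : ∀ x y : ℝ, y ∈ FP1 → |x - round x| ≤ |x - y|)
    (x : ℝ) (β : ℤ) (h1 : 0.95 * (10:ℝ)^β < x) (h2 : x < 1.15 * (10:ℝ)^β) :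
    round x = (10:ℝ)^β := by
  have hp : (0:ℝ) < (10:ℝ)^β := by positivity
  have hz := hnear x _ (pow_mem_FP1 β)
  obtain ⟨hl, hr⟩ := abs_le.mp hz
  apply fp1_eq (hmem x) β <;>
    rcases abs_cases (x - (10:ℝ)^β) with ⟨he, _⟩ | ⟨he, _⟩ <;> rw [he] at hl hr <;> linarith

lemma zero_mem_FP1 : (0:ℝ) ∈ FP1 := ⟨0, by norm_num, 0, by norm_num⟩

/-- For `u = 10^{c₁}`, `v = 10^{c₂}` and a round-to-nearest rounding function `[·]`
onto precision-1 base-10 floating-point numbers (ties broken upwards), setting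
`temp = [u + v]`, `temp2 = [temp − u]`, `w = [1.1·temp2]` yields
`w = v` if `v ≥ u` and `w = 0` if `v < u`. -/
theorem filter_plus_correct (round : ℝ → ℝ)
    (hmem : ∀ x : ℝ, round x ∈ FP1)
    (hnear : ∀ x y : ℝ, y ∈ FP1 → |x - round x| ≤ |x - y|)
    (htie : ∀ x y : ℝ, y ∈ FP1 → |x - round x| = |x - y| → y ≤ round x)
    (c₁ c₂ : ℕ) (u v temp temp2 w : ℝ)
    (hu : u = (10:ℝ) ^ c₁) (hv : v = (10:ℝ) ^ c₂)
    (htemp : temp = round (u + v))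
    (htemp2 : temp2 = round (temp - u))
    (hw : w = round ((1.1 : ℝ) * temp2)) :
    (u ≤ v → w = v) ∧ (v < u → w = 0) := by
  rw [← zpow_natCast (10:ℝ) c₁] at hu
  rw [← zpow_natCast (10:ℝ) c₂] at hv
  subst hu hv htemp htemp2 hw
  set A : ℤ := (c₁:ℤ) with hA
  set B : ℤ := (c₂:ℤ) with hB
  have hten : (10:ℝ) ≠ 0 := by norm_num
  have hpA : (0:ℝ) < (10:ℝ)^A := by positivity
  have hpB : (0:ℝ) < (10:ℝ)^B := by positivity
  constructor
  · intro huv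
    have hc : A ≤ B := by
      by_contra h
      push_neg at h
      have := zpow_lt_zpow_right₀ (by norm_num : (1:ℝ) < 10) h
      linarith
    rcases eq_or_lt_of_le hc with heq | hlt
    · -- A = B
      rw [← heq]
      have hmem2 : ((10:ℝ)^A + 10^A) ∈ FP1 := by
        refine ⟨2, by norm_num, A+1, ?_⟩
        rw [zpow_add_one₀ hten]; push_cast; ring
      rw [round_fix round hnear hmem2]
      rw [show (10:ℝ)^A + 10^A - 10^A = 10^A by ring]
      rw [round_fix round hnear (pow_mem_FP1 A)]
      exact round_near_pow round hmem hnear _ A (by linarith) (by linarith)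
    · -- A < B
      have hsmall : (10:ℝ)^A ≤ (10:ℝ)^B / 10 := by
        have h1 : (10:ℝ)^A ≤ 10^(B-1) := zpow_le_zpow_right₀ (by norm_num) (by omega)
        rw [zpow_sub₀ hten, zpow_one] at h1
        exact h1
      have htmp : round ((10:ℝ)^A + 10^B) = 10^B :=
        round_near_pow round hmem hnear _ B (by linarith) (by linarith)
      rw [htmp]
      rw [show (10:ℝ)^B - 10^A = 10^B - 10^A by ring]
      rcases eq_or_lt_of_le (by omega : A + 1 ≤ B) with heq1 | hlt2
      · -- B = A + 1
        have hkey : (10:ℝ)^B = 10 * 10^A := by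
          rw [← heq1, zpow_add_one₀ hten]; ring
        have hmem9 : ((10:ℝ)^B - 10^A) ∈ FP1 := by
          refine ⟨9, le_refl 9, B, ?_⟩
          rw [hkey]; push_cast; ring
        rw [round_fix round hnear hmem9]
        exact round_near_pow round hmem hnear _ B
          (by rw [hkey]; nlinarith) (by rw [hkey]; nlinarith)
      · -- A + 2 ≤ B
        have hsmall2 : (10:ℝ)^A ≤ (10:ℝ)^B / 100 := by
          have h1 : (10:ℝ)^A ≤ 10^(B-2) := zpow_le_zpow_right₀ (by norm_num) (by omega)
          rw [zpow_sub₀ hten] at h1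
          norm_num at h1
          linarith
        have ht2 : round ((10:ℝ)^B - 10^A) = 10^B :=
          round_near_pow round hmem hnear _ B (by linarith) (by linarith)
        rw [ht2]
        exact round_near_pow round hmem hnear _ B (by linarith) (by linarith)
  · intro hvu
    have hc : B < A := by
      by_contra h
      push_neg at h
      have := zpow_le_zpow_right₀ (by norm_num : (1:ℝ) ≤ 10) h
      linarith
    have hsmall : (10:ℝ)^B ≤ (10:ℝ)^A / 10 := by
      have h1 : (10:ℝ)^B ≤ 10^(A-1) := zpow_le_zpow_right₀ (by norm_num) (by omega)
      rw [zpow_sub₀ hten, zpow_one] at h1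
      exact h1
    have htmp : round ((10:ℝ)^A + 10^B) = 10^A :=
      round_near_pow round hmem hnear _ A (by linarith) (by linarith)
    rw [htmp]
    rw [show (10:ℝ)^A - 10^A = 0 by ring]
    rw [round_fix round hnear zero_mem_FP1]
    rw [show (1.1:ℝ) * 0 = 0 by ring]
    exact round_fix round hnear zero_mem_FP1
end

section
/- Let M be a nonnegative matrix whose graph is strongly connected with all entries of M^C positive for some C, let the rounding function be log-bounded with constant c, and let m bound entries of M as above. Then for all times t and all coordinates q, q': x^{(t+C)}_q / x^{(t+C)}_{q'} ≤ d^C (mc)^{2C}, where d is the dimension; hence all coordinates of the rounded orbit have exponents within ⌈log₁₀(d^C (mc)^{2C})⌉ + 2 of each other. -/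
open Finset in
theorem aux_pow_nonneg {d : ℕ} (M : Matrix (Fin d) (Fin d) ℝ)
    (hMnn : ∀ i j, 0 ≤ M i j) : ∀ k i j, 0 ≤ (M ^ k) i j := by
  intro k
  induction k with
  | zero =>
    intro i j
    rw [pow_zero, Matrix.one_apply]
    split <;> norm_num
  | succ k ih =>
    intro i j
    rw [pow_succ, Matrix.mul_apply]
    exact Finset.sum_nonneg fun l _ => mul_nonneg (ih i l) (hMnn l j)

theorem aux_pow_upper {d : ℕ} (M : Matrix (Fin d) (Fin d) ℝ) (m : ℝ) (hm : 0 < m)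
    (hMnn : ∀ i j, 0 ≤ M i j)
    (hMm : ∀ i j, M i j ≠ 0 → 1 / m ≤ M i j ∧ M i j ≤ m) :
    ∀ k i j, (M ^ k) i j ≤ (d : ℝ) ^ k * m ^ k := by
  intro k
  induction k with
  | zero =>
    intro i j
    rw [pow_zero, Matrix.one_apply]
    split <;> norm_num
  | succ k ih =>
    intro i j
    rw [pow_succ, Matrix.mul_apply]
    have hMle : ∀ l, M l j ≤ m := fun l => by
      by_cases h : M l j = 0
      · rw [h]; exact hm.le
      · exact (hMm l j h).2
    calc ∑ l, (M ^ k) i l * M l j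
        ≤ ∑ _l : Fin d, ((d:ℝ)^k * m^k) * m :=
          Finset.sum_le_sum fun l _ =>
            mul_le_mul (ih i l) (hMle l) (hMnn l j) (by positivity)
      _ = (d:ℝ)^(k+1) * m^(k+1) := by
          rw [Finset.sum_const, Finset.card_univ, Fintype.card_fin]
          ring

theorem aux_pow_lower {d : ℕ} (M : Matrix (Fin d) (Fin d) ℝ) (m : ℝ) (hm : 0 < m)
    (hMnn : ∀ i j, 0 ≤ M i j)
    (hMm : ∀ i j, M i j ≠ 0 → 1 / m ≤ M i j ∧ M i j ≤ m) :
    ∀ k i j, 0 < (M ^ k) i j → (1 / m) ^ k ≤ (M ^ k) i j := by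
  intro k
  induction k with
  | zero =>
    intro i j h
    simp only [pow_zero] at h ⊢
    exact le_of_eq (by rw [Matrix.one_apply] at h ⊢; split at h <;> simp_all)
  | succ k ih =>
    intro i j h
    rw [pow_succ, Matrix.mul_apply] at h
    have hterm : ∀ l, 0 ≤ (M ^ k) i l * M l j :=
      fun l => mul_nonneg (aux_pow_nonneg M hMnn k i l) (hMnn l j)
    obtain ⟨l, -, hl⟩ := Finset.exists_lt_of_sum_lt (f := fun _ => (0:ℝ))
      (g := fun l => (M ^ k) i l * M l j) (by simpa using h)
    have h1 : 0 < (M ^ k) i l := by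
      rcases (aux_pow_nonneg M hMnn k i l).lt_or_eq with h1 | h1
      · exact h1
      · exfalso; rw [← h1] at hl; simp at hl
    have h2 : 0 < M l j := by
      rcases (hMnn l j).lt_or_eq with h2 | h2
      · exact h2
      · exfalso; rw [← h2] at hl; simp at hl
    have hsum := Finset.single_le_sum (f := fun l => (M ^ k) i l * M l j)
      (fun l _ => hterm l) (Finset.mem_univ l)
    calc (1/m)^(k+1) = (1/m)^k * (1/m) := pow_succ _ _
      _ ≤ (M ^ k) i l * M l j :=
          mul_le_mul (ih i l h1) (hMm l j h2.ne').1 (by positivity) h1.le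
      _ ≤ ∑ l, (M ^ k) i l * M l j := hsum
      _ = (M ^ (k+1)) i j := by rw [pow_succ, Matrix.mul_apply]

theorem aux_orbit_ub {d : ℕ} (c m : ℝ) (hc : 1 ≤ c) (hm : 0 < m)
    (round : ℝ → ℝ)
    (hlog : ∀ y : ℝ, |y| / c ≤ |round y| ∧ |round y| ≤ c * |y|)
    (M : Matrix (Fin d) (Fin d) ℝ) (hMnn : ∀ i j, 0 ≤ M i j)
    (x : ℕ → Fin d → ℝ) (hpos : ∀ t i, 0 < x t i)
    (horbit : ∀ t i, x (t + 1) i = round (∑ j, M i j * x t j)) :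
    ∀ t s i, x (t + s) i ≤ c ^ s * ∑ j, (M ^ s) i j * x t j := by
  have hc0 : (0:ℝ) < c := lt_of_lt_of_le one_pos hc
  have hS : ∀ t i, 0 ≤ ∑ j, M i j * x t j := fun t i =>
    Finset.sum_nonneg fun j _ => mul_nonneg (hMnn i j) (hpos t j).le
  have step : ∀ t i, x (t + 1) i ≤ c * ∑ j, M i j * x t j := by
    intro t i
    have h := (hlog (∑ j, M i j * x t j)).2
    rw [← horbit t i, abs_of_pos (hpos (t+1) i), abs_of_nonneg (hS t i)] at h
    exact h
  intro t s
  induction s with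
  | zero =>
    intro i
    simp [Matrix.one_apply]
  | succ s ih =>
    intro i
    have key : ∑ j, M i j * (c ^ s * ∑ k, (M ^ s) j k * x t k)
        = c ^ s * ∑ k, (M ^ (s+1)) i k * x t k := by
      simp only [pow_succ', Matrix.mul_apply, Finset.sum_mul, Finset.mul_sum]
      rw [Finset.sum_comm]
      exact Finset.sum_congr rfl fun j _ => Finset.sum_congr rfl fun k _ => by ring
    calc x (t + (s+1)) i ≤ c * ∑ j, M i j * x (t + s) j := step (t+s) i
      _ ≤ c * ∑ j, M i j * (c ^ s * ∑ k, (M ^ s) j k * x t k) := by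
          refine mul_le_mul_of_nonneg_left (Finset.sum_le_sum fun j _ => ?_) hc0.le
          exact mul_le_mul_of_nonneg_left (ih j) (hMnn i j)
      _ = c ^ (s+1) * ∑ k, (M ^ (s+1)) i k * x t k := by rw [key]; ring

theorem aux_orbit_lb {d : ℕ} (c m : ℝ) (hc : 1 ≤ c) (hm : 0 < m)
    (round : ℝ → ℝ)
    (hlog : ∀ y : ℝ, |y| / c ≤ |round y| ∧ |round y| ≤ c * |y|)
    (M : Matrix (Fin d) (Fin d) ℝ) (hMnn : ∀ i j, 0 ≤ M i j)
    (x : ℕ → Fin d → ℝ) (hpos : ∀ t i, 0 < x t i)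
    (horbit : ∀ t i, x (t + 1) i = round (∑ j, M i j * x t j)) :
    ∀ t s i, ∑ j, (M ^ s) i j * x t j ≤ c ^ s * x (t + s) i := by
  have hc0 : (0:ℝ) < c := lt_of_lt_of_le one_pos hc
  have hS : ∀ t i, 0 ≤ ∑ j, M i j * x t j := fun t i =>
    Finset.sum_nonneg fun j _ => mul_nonneg (hMnn i j) (hpos t j).le
  have step : ∀ t i, ∑ j, M i j * x t j ≤ c * x (t + 1) i := by
    intro t i
    have h := (hlog (∑ j, M i j * x t j)).1
    rw [← horbit t i, abs_of_pos (hpos (t+1) i), abs_of_nonneg (hS t i)] at h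
    exact (div_le_iff₀' hc0).mp h
  intro t s
  induction s with
  | zero =>
    intro i
    simp [Matrix.one_apply]
  | succ s ih =>
    intro i
    have key : ∑ j, M i j * (∑ k, (M ^ s) j k * x t k)
        = ∑ k, (M ^ (s+1)) i k * x t k := by
      simp only [pow_succ', Matrix.mul_apply, Finset.sum_mul, Finset.mul_sum]
      rw [Finset.sum_comm]
      exact Finset.sum_congr rfl fun j _ => Finset.sum_congr rfl fun k _ => by ring
    calc ∑ k, (M ^ (s+1)) i k * x t k
        = ∑ j, M i j * (∑ k, (M ^ s) j k * x t k) := key.symm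
      _ ≤ ∑ j, M i j * (c ^ s * x (t + s) j) := by
          refine Finset.sum_le_sum fun j _ => ?_
          exact mul_le_mul_of_nonneg_left (ih j) (hMnn i j)
      _ = c ^ s * ∑ j, M i j * x (t + s) j := by
          rw [Finset.mul_sum]; exact Finset.sum_congr rfl fun j _ => by ring
      _ ≤ c ^ s * (c * x (t + s + 1) i) :=
          mul_le_mul_of_nonneg_left (step (t+s) i) (by positivity)
      _ = c ^ (s+1) * x (t + (s+1)) i := by ring


/-- For a rounded orbit of a nonnegative matrix `M` whose `C`-th power is entrywise
positive, under a log-bounded, sign-preserving rounding function, the ratio of any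
two coordinates at time `t + C` is at most `d^C (mc)^{2C}`; hence all coordinates
are β-close (have base-10 exponents within `β = ⌈log₁₀(d^C (mc)^{2C})⌉ + 2` of
each other). -/
theorem rounded_orbit_coordinates_close (d : ℕ) (hd : 0 < d) (C : ℕ)
    (c m : ℝ) (hc : 1 ≤ c) (hm : 0 < m)
    (round : ℝ → ℝ)
    (hlog : ∀ y : ℝ, |y| / c ≤ |round y| ∧ |round y| ≤ c * |y|)
    (hsign : ∀ y : ℝ, Real.sign (round y) = Real.sign y)
    (M : Matrix (Fin d) (Fin d) ℝ) (hMnn : ∀ i j, 0 ≤ M i j)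
    (hMm : ∀ i j, M i j ≠ 0 → 1 / m ≤ M i j ∧ M i j ≤ m)
    (hMC : ∀ i j, 0 < (M ^ C) i j)
    (x : ℕ → Fin d → ℝ) (hpos : ∀ t i, 0 < x t i)
    (horbit : ∀ t i, x (t + 1) i = round (∑ j, M i j * x t j)) :
    (∀ (t : ℕ) (q q' : Fin d),
        x (t + C) q / x (t + C) q' ≤ (d : ℝ) ^ C * (m * c) ^ (2 * C)) ∧
    (∀ (t : ℕ) (q q' : Fin d) (mq mq' : ℝ) (eq eq' : ℤ),
        x (t + C) q = mq * (10:ℝ) ^ eq → mq ∈ Set.Ico (0.1 : ℝ) 1 →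
        x (t + C) q' = mq' * (10:ℝ) ^ eq' → mq' ∈ Set.Ico (0.1 : ℝ) 1 →
        |eq - eq'| < ⌈Real.logb 10 ((d : ℝ) ^ C * (m * c) ^ (2 * C))⌉ + 2) := by
  have hc0 : (0:ℝ) < c := lt_of_lt_of_le one_pos hc
  have hR : (0:ℝ) < (d : ℝ) ^ C * (m * c) ^ (2 * C) := by positivity
  have part1 : ∀ (t : ℕ) (q q' : Fin d),
      x (t + C) q / x (t + C) q' ≤ (d : ℝ) ^ C * (m * c) ^ (2 * C) := by
    intro t q q'
    have hub := aux_orbit_ub c m hc hm round hlog M hMnn x hpos horbit t C q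
    have hlb := aux_orbit_lb c m hc hm round hlog M hMnn x hpos horbit t C q'
    have hSle : ∑ j, (M ^ C) q j * x t j
        ≤ (d:ℝ)^C * m^(2*C) * ∑ j, (M ^ C) q' j * x t j := by
      rw [Finset.mul_sum]
      refine Finset.sum_le_sum fun j _ => ?_
      have h1 := aux_pow_upper M m hm hMnn hMm C q j
      have h2 := aux_pow_lower M m hm hMnn hMm C q' j (hMC q' j)
      have h3 : (1:ℝ) ≤ m ^ C * (M ^ C) q' j := by
        have he : (1/m)^C * m^C = 1 := by
          rw [div_pow, one_pow, div_mul_cancel₀]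
          exact (pow_pos hm C).ne'
        nlinarith [pow_pos hm C]
      have hx := (hpos t j).le
      have hkey : (M ^ C) q j ≤ (d:ℝ)^C * m^(2*C) * (M ^ C) q' j := by
        calc (M ^ C) q j ≤ (d:ℝ)^C * m^C := h1
          _ ≤ (d:ℝ)^C * m^C * (m^C * (M ^ C) q' j) :=
              le_mul_of_one_le_right (by positivity) h3
          _ = (d:ℝ)^C * m^(2*C) * (M ^ C) q' j := by rw [two_mul, pow_add]; ring
      calc (M ^ C) q j * x t j
          ≤ ((d:ℝ)^C * m^(2*C) * (M ^ C) q' j) * x t j :=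
            mul_le_mul_of_nonneg_right hkey hx
        _ = (d:ℝ)^C * m^(2*C) * ((M ^ C) q' j * x t j) := by ring
    rw [div_le_iff₀ (hpos (t+C) q')]
    have hcC : (0:ℝ) < c ^ C := pow_pos hc0 C
    calc x (t + C) q ≤ c^C * ∑ j, (M ^ C) q j * x t j := hub
      _ ≤ c^C * ((d:ℝ)^C * m^(2*C) * ∑ j, (M ^ C) q' j * x t j) :=
          mul_le_mul_of_nonneg_left hSle hcC.le
      _ ≤ c^C * ((d:ℝ)^C * m^(2*C) * (c^C * x (t+C) q')) :=
          mul_le_mul_of_nonneg_left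
            (mul_le_mul_of_nonneg_left hlb (by positivity)) hcC.le
      _ = (d:ℝ)^C * (m*c)^(2*C) * x (t+C) q' := by
          rw [mul_pow, two_mul, pow_add, pow_add]; ring
  refine ⟨part1, ?_⟩
  intro t q q' mq mq' eq eq' hq hmq hq' hmq'
  set R := (d : ℝ) ^ C * (m * c) ^ (2 * C) with hRdef
  have h1 := part1 t q q'
  have h2 := part1 t q' q
  have key : ∀ (a b mqa mqb : ℝ) (ea eb : ℤ), 0 < a → 0 < b →
      a / b ≤ R → a = mqa * 10^ea → mqa ∈ Set.Ico (0.1:ℝ) 1 →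
      b = mqb * 10^eb → mqb ∈ Set.Ico (0.1:ℝ) 1 →
      ea - eb < ⌈Real.logb 10 R⌉ + 1 := by
    intro a b mqa mqb ea eb ha hb hab hA hmA hB hmB
    obtain ⟨hmA1, hmA2⟩ := hmA
    obtain ⟨hmB1, hmB2⟩ := hmB
    have hmqa : (0:ℝ) < mqa := lt_of_lt_of_le (by norm_num) hmA1
    have hmqb : (0:ℝ) < mqb := lt_of_lt_of_le (by norm_num) hmB1
    have hzq : ((10:ℝ))^(ea - eb) = (a / b) * (mqb / mqa) := by
      rw [hA, hB, zpow_sub₀ (by norm_num : (10:ℝ) ≠ 0)]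
      have h10a : ((10:ℝ))^ea ≠ 0 := zpow_ne_zero _ (by norm_num)
      have h10b : ((10:ℝ))^eb ≠ 0 := zpow_ne_zero _ (by norm_num)
      field_simp
    have hlt : ((10:ℝ))^(ea - eb) < 10 * R := by
      rw [hzq]
      have hab0 : 0 < a / b := div_pos ha hb
      have hfr : mqb / mqa < 10 := by
        rw [div_lt_iff₀ hmqa]
        nlinarith
      calc (a/b) * (mqb/mqa) ≤ R * (mqb/mqa) :=
            mul_le_mul_of_nonneg_right hab (by positivity)
        _ < R * 10 := mul_lt_mul_of_pos_left hfr (lt_of_lt_of_le hab0 hab)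
        _ = 10 * R := by ring
    have hlog2 : ((ea - eb : ℤ) : ℝ) < 1 + Real.logb 10 R := by
      have h := Real.logb_lt_logb (by norm_num : (1:ℝ) < 10)
        (zpow_pos (by norm_num) _) hlt
      have hzp : Real.logb 10 ((10:ℝ)^(ea - eb)) = ((ea - eb : ℤ) : ℝ) := by
        rw [Real.logb, Real.log_zpow, mul_div_assoc,
          div_self (Real.log_pos (by norm_num)).ne', mul_one]
      rwa [hzp, Real.logb_mul (by norm_num) hR.ne',
        Real.logb_self_eq_one (by norm_num)] at h
    have hceil : Real.logb 10 R ≤ (⌈Real.logb 10 R⌉ : ℝ) := Int.le_ceil _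
    have hfin : ((ea - eb : ℤ) : ℝ) < ((⌈Real.logb 10 R⌉ + 1 : ℤ) : ℝ) := by
      push_cast at hlog2 ⊢; linarith
    exact_mod_cast hfin
  have hA := key _ _ _ _ eq eq' (hpos _ q) (hpos _ q') h1 hq hmq hq' hmq'
  have hB := key _ _ _ _ eq' eq (hpos _ q') (hpos _ q) h2 hq' hmq' hq hmq
  rw [abs_lt]
  constructor <;> linarith
end

section
/- Let (x^{(t)}) be a sequence of vectors of precision-p floating-point numbers such that (a) the rounding function is mantissa-based ([10^α·x] = 10^α·[x]), and (b) for all t ≥ C, the exponents of all coordinates of x^{(t)} lie within β of the exponent of the first coordinate. Then there exist N ≥ C, T ≥ 1 with N, T ≤ C + 10^{pm}(2β+1)^m + 1 (m the dimension), and α ∈ ℤ, such that x^{(t+T)} = 10^α · x^{(t)} for all t ≥ N. -/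
/-- Pigeonhole pseudo-periodicity: if a rounded orbit `x^{(t+1)} = [M x^{(t)}]` of
precision-`p` floating-point vectors (with a mantissa-based rounding function)
has, from time `C` on, all coordinate exponents within `β` of the exponent of the
first coordinate, then there exist `N ≥ C`, `T ≥ 1` with
`N, T ≤ C + 10^{pm}(2β+1)^m + 1` (`m` the dimension) and `α ∈ ℤ` such that
`x^{(t+T)} = 10^α · x^{(t)}` for all `t ≥ N`. -/
theorem orbit_pseudo_periodic (p md : ℕ) (hmd : 0 < md) (C β : ℕ)
    (round : ℝ → ℝ)
    (hmb : ∀ (α : ℤ) (y : ℝ), round ((10:ℝ) ^ α * y) = (10:ℝ) ^ α * round y)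
    (M : Matrix (Fin md) (Fin md) ℝ)
    (x : ℕ → Fin md → ℝ)
    (horbit : ∀ t i, x (t + 1) i = round (∑ j, M i j * x t j))
    (man : ℕ → Fin md → ℝ) (ex : ℕ → Fin md → ℤ)
    (hrep : ∀ t i, x t i = man t i * (10:ℝ) ^ ex t i)
    (hman : ∀ t i, man t i ∈ Set.Ico (0.1 : ℝ) 1)
    (hdig : ∀ t i, ∃ k : ℤ, man t i = (k : ℝ) / 10 ^ p)
    (hclose : ∀ t, C ≤ t → ∀ i, |ex t i - ex t ⟨0, hmd⟩| ≤ (β : ℤ)) :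
    ∃ (N T : ℕ) (α : ℤ), C ≤ N ∧ 1 ≤ T ∧
      N ≤ C + 10 ^ (p * md) * (2 * β + 1) ^ md + 1 ∧
      T ≤ C + 10 ^ (p * md) * (2 * β + 1) ^ md + 1 ∧
      ∀ t, N ≤ t → ∀ i, x (t + T) i = (10:ℝ) ^ α * x t i := by
  classical
  set K := 10 ^ (p * md) * (2 * β + 1) ^ md with hK
  have h10 : (0:ℝ) < 10 ^ p := by positivity
  -- digit function with bounds
  have hk : ∀ t i, ∃ k : ℤ, man t i = (k : ℝ) / 10 ^ p ∧ 0 ≤ k ∧ k < 10 ^ p := by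
    intro t i
    obtain ⟨k, hkk⟩ := hdig t i
    have h1 := (hman t i).1
    have h2 := (hman t i).2
    rw [hkk] at h1 h2
    refine ⟨k, hkk, ?_, ?_⟩
    · have : (0:ℝ) ≤ (k:ℝ) := by
        have := (le_div_iff₀ h10).mp h1
        nlinarith
      exact_mod_cast this
    · have : (k:ℝ) < 10 ^ p := by
        have := (div_lt_one h10).mp h2
        exact_mod_cast this
      exact_mod_cast this
  choose k hkman hk0 hklt using hk
  have hcast : ((10:ℤ)) ^ p = ((10 ^ p : ℕ) : ℤ) := by push_cast; ring
  have hkb : ∀ t i, (k t i).toNat < 10 ^ p := by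
    intro t i
    have h1 := hklt t i
    have h2 := hk0 t i
    rw [hcast] at h1
    omega
  have heb : ∀ (t : ℕ), C ≤ t → ∀ i, (ex t i - ex t ⟨0, hmd⟩ + β).toNat < 2 * β + 1 := by
    intro t ht i
    have := hclose t ht i
    rw [abs_le] at this
    omega
  have hcardS : Fintype.card (Fin md → Fin (10 ^ p) × Fin (2 * β + 1)) = K := by
    rw [hK]
    simp [Fintype.card_fun, mul_pow, ← pow_mul]
  obtain ⟨a, b, hab, hgab⟩ :=
    Fintype.exists_ne_map_eq_of_card_lt
      (fun (a : Fin (K + 1)) (i : Fin md) =>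
        ((⟨(k (C + a) i).toNat, hkb _ i⟩ : Fin (10 ^ p)),
         (⟨(ex (C + a) i - ex (C + a) ⟨0, hmd⟩ + β).toNat,
            heb _ (Nat.le_add_right _ _) i⟩ : Fin (2 * β + 1))))
      (by simp [hcardS])
  have hkeqN : ∀ i, (k (C + a) i).toNat = (k (C + b) i).toNat :=
    fun i => congrArg (fun z => ((z i).1 : ℕ)) hgab
  have hexN : ∀ i, (ex (C + a) i - ex (C + a) ⟨0, hmd⟩ + β).toNat
      = (ex (C + b) i - ex (C + b) ⟨0, hmd⟩ + β).toNat :=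
    fun i => congrArg (fun z => ((z i).2 : ℕ)) hgab
  -- wlog a < b
  obtain ⟨a, b, hab, hkeqN, hexN⟩ : ∃ a b : Fin (K + 1), (a : ℕ) < (b : ℕ) ∧
      (∀ i, (k (C + a) i).toNat = (k (C + b) i).toNat) ∧
      (∀ i, (ex (C + a) i - ex (C + a) ⟨0, hmd⟩ + β).toNat
          = (ex (C + b) i - ex (C + b) ⟨0, hmd⟩ + β).toNat) := by
    rcases lt_or_gt_of_ne hab with h | h
    · exact ⟨a, b, h, hkeqN, hexN⟩
    · exact ⟨b, a, h, fun i => (hkeqN i).symm, fun i => (hexN i).symm⟩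
  set s := C + (a : ℕ) with hs
  set s' := C + (b : ℕ) with hs'
  have hss' : s < s' := by omega
  -- equal states
  have hmaneq : ∀ i, man s i = man s' i := by
    intro i
    have h1 := hkeqN i
    have hkeq : k s i = k s' i := by
      have := hk0 s i; have := hk0 s' i; omega
    rw [hkman s i, hkman s' i, hkeq]
  have hexeq : ∀ i, ex s i - ex s ⟨0, hmd⟩ = ex s' i - ex s' ⟨0, hmd⟩ := by
    intro i
    have h2 := hexN i
    have c1 := hclose s (Nat.le_add_right _ _) i
    have c2 := hclose s' (Nat.le_add_right _ _) i
    rw [abs_le] at c1 c2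
    omega
  set α := ex s' ⟨0, hmd⟩ - ex s ⟨0, hmd⟩ with hα
  have hbase : ∀ i, x s' i = (10:ℝ) ^ α * x s i := by
    intro i
    have hei : ex s' i = ex s i + α := by have := hexeq i; omega
    rw [hrep s' i, hrep s i, hei, ← hmaneq i, zpow_add₀ (by norm_num : (10:ℝ) ≠ 0)]
    ring
  -- step lemma
  have hstep : ∀ u v : ℕ, (∀ i, x v i = (10:ℝ) ^ α * x u i) →
      ∀ i, x (v + 1) i = (10:ℝ) ^ α * x (u + 1) i := by
    intro u v h i
    rw [horbit v i, horbit u i, ← hmb α]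
    congr 1
    rw [Finset.mul_sum]
    exact Finset.sum_congr rfl fun j _ => by rw [h j]; ring
  set T := s' - s with hT
  have hsT : s + T = s' := by omega
  have hall : ∀ d, ∀ i, x (s + d + T) i = (10:ℝ) ^ α * x (s + d) i := by
    intro d
    induction d with
    | zero => simpa [hsT] using hbase
    | succ n ih =>
        intro i
        have h := hstep (s + n) (s + n + T) ih i
        have hrw : s + (n + 1) + T = s + n + T + 1 := by omega
        have hrw2 : s + (n + 1) = s + n + 1 := by omega
        rw [hrw, hrw2]
        exact h
  refine ⟨s, T, α, Nat.le_add_right _ _, by omega, ?_, ?_, ?_⟩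
  · have := a.isLt; omega
  · have := b.isLt; omega
  · intro t ht i
    have hts : t = s + (t - s) := by omega
    rw [hts]
    exact hall (t - s) i
end
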